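/- Bound on the double divergence of θ (Lemma B.1(4)): let d ≥ 2 and A, B, C ∈ ℝ with C ≥ 0, B ≤ A < 2B and A + C ≥ 2, and let θ be as defined below. Then for every x ∈ (0,∞)^d with x_l ≤ 1 for all l: 0 ≤ Σ_{i,j=1}^d ∂_i ∂_j θ_{ij}(x) ≤ d (A+C)(A+C−1) + d(d−1)(A+C)². -/

import Mathlib

open Real Finset


/-- The matrix-valued function `θ` of Lemma B.1. -/
noncomputable def thetaMat (d : ℕ) (A B C : ℝ) (x : Fin d → ℝ) :
    Matrix (Fin d) (Fin d) ℝ :=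
  fun i j => if i = j then x i ^ A * ∏ l, x l ^ C
    else x i ^ B * x j ^ B * ∏ l, x l ^ (A + C - B)

variable {d : ℕ}

lemma hasFDerivAt_prod_rpow (e : Fin d → ℝ) (y : Fin d → ℝ) (hy : ∀ l, 0 < y l) :
    HasFDerivAt (fun z : Fin d → ℝ => ∏ l, z l ^ e l)
      (∑ l, (∏ m ∈ Finset.univ.erase l, y m ^ e m) •
        ((e l * y l ^ (e l - 1)) • (ContinuousLinearMap.proj l : (Fin d → ℝ) →L[ℝ] ℝ))) y := by
  exact HasFDerivAt.finset_prod (fun l _ => by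
    have h := (Real.hasDerivAt_rpow_const (x := y l) (p := e l) (Or.inl (hy l).ne')).comp_hasFDerivAt y
      ((ContinuousLinearMap.proj l : (Fin d → ℝ) →L[ℝ] ℝ).hasFDerivAt)
    exact h)

lemma fderiv_prod_rpow_apply (e : Fin d → ℝ) (y : Fin d → ℝ) (hy : ∀ l, 0 < y l) (j : Fin d) :
    fderiv ℝ (fun z : Fin d → ℝ => ∏ l, z l ^ e l) y (Pi.single j 1)
      = e j * ∏ l, y l ^ (e l - if l = j then 1 else 0) := by
  rw [(hasFDerivAt_prod_rpow e y hy).fderiv]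
  have h1 : ∀ l : Fin d, (ContinuousLinearMap.proj l : (Fin d → ℝ) →L[ℝ] ℝ) (Pi.single j 1)
      = if l = j then 1 else 0 := by
    intro l; simp [Pi.single_apply]
  rw [ContinuousLinearMap.sum_apply]
  simp only [ContinuousLinearMap.smul_apply, h1, smul_eq_mul, mul_ite, mul_one, mul_zero]
  rw [Finset.sum_ite_eq' Finset.univ j]
  simp only [Finset.mem_univ, if_true]
  have h2 : ∏ l, y l ^ (e l - if l = j then 1 else 0)
      = (y j ^ (e j - 1)) * ∏ m ∈ Finset.univ.erase j, y m ^ e m := by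
    rw [← Finset.mul_prod_erase Finset.univ _ (Finset.mem_univ j)]
    simp only [if_pos rfl]
    congr 1
    exact Finset.prod_congr rfl fun m hm => by
      rw [if_neg (Finset.mem_erase.mp hm).1, sub_zero]
  rw [h2]; ring

lemma isOpen_pos : IsOpen {y : Fin d → ℝ | ∀ l, 0 < y l} := by
  have : {y : Fin d → ℝ | ∀ l, 0 < y l} = ⋂ l, (fun y : Fin d → ℝ => y l) ⁻¹' Set.Ioi 0 := by
    ext y; simp [Set.mem_iInter]
  rw [this]
  exact isOpen_iInter_of_finite fun l => isOpen_Ioi.preimage (continuous_apply l)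

lemma second_deriv_prod_rpow (e : Fin d → ℝ) (x : Fin d → ℝ) (hx : ∀ l, 0 < x l) (i j : Fin d) :
    fderiv ℝ (fun y => fderiv ℝ (fun z : Fin d → ℝ => ∏ l, z l ^ e l) y (Pi.single j 1)) x
        (Pi.single i 1)
      = e j * ((e i - if i = j then 1 else 0) *
          ∏ l, x l ^ (e l - (if l = j then 1 else 0) - (if l = i then 1 else 0))) := by
  set e1 : Fin d → ℝ := fun l => e l - if l = j then 1 else 0 with he1
  have hmem : {y : Fin d → ℝ | ∀ l, 0 < y l} ∈ nhds x := isOpen_pos.mem_nhds hx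
  have hloc : (fun y => fderiv ℝ (fun z : Fin d → ℝ => ∏ l, z l ^ e l) y (Pi.single j 1))
      =ᶠ[nhds x] fun y => e j * ∏ l, y l ^ e1 l := by
    filter_upwards [hmem] with y hy
    exact fderiv_prod_rpow_apply e y hy j
  rw [hloc.fderiv_eq]
  rw [fderiv_const_mul (hasFDerivAt_prod_rpow e1 x hx).differentiableAt]
  rw [ContinuousLinearMap.smul_apply, smul_eq_mul,
    fderiv_prod_rpow_apply e1 x hx i]

/-- exponent profile of `θ_{ij}` as a pure product of powers -/
noncomputable def thetaExp (A B C : ℝ) (i j l : Fin d) : ℝ :=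
  if i = j then C + (if l = i then A else 0)
  else (A + C - B) + (if l = i then B else 0) + (if l = j then B else 0)

lemma theta_eq_prod (A B C : ℝ) (i j : Fin d) (z : Fin d → ℝ) (hz : ∀ l, 0 < z l) :
    thetaMat d A B C z i j = ∏ l, z l ^ thetaExp A B C i j l := by
  unfold thetaMat thetaExp
  by_cases h : i = j
  · simp only [if_pos h]
    have key : ∀ l, z l ^ (C + if l = i then A else 0)
        = z l ^ C * (if l = i then z l ^ A else 1) := by
      intro l
      rw [Real.rpow_add (hz l)]
      split_ifs <;> simp
    simp only [key, Finset.prod_mul_distrib,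
      Finset.prod_ite_eq' Finset.univ i (fun l => z l ^ A)]
    simp [mul_comm]
  · simp only [if_neg h]
    have key : ∀ l, z l ^ ((A + C - B) + (if l = i then B else 0) + (if l = j then B else 0))
        = z l ^ (A + C - B) * (if l = i then z l ^ B else 1)
          * (if l = j then z l ^ B else 1) := by
      intro l
      rw [Real.rpow_add (hz l), Real.rpow_add (hz l)]
      split_ifs <;> simp
    simp only [key, Finset.prod_mul_distrib,
      Finset.prod_ite_eq' Finset.univ i (fun l => z l ^ B),
      Finset.prod_ite_eq' Finset.univ j (fun l => z l ^ B)]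
    simp [mul_comm, mul_assoc, mul_left_comm]

lemma theta_second_deriv (A B C : ℝ) (i j : Fin d) (x : Fin d → ℝ) (hx : ∀ l, 0 < x l) :
    fderiv ℝ (fun y => fderiv ℝ (fun z => thetaMat d A B C z i j) y (Pi.single j 1)) x
        (Pi.single i 1)
      = thetaExp A B C i j j * ((thetaExp A B C i j i - if i = j then 1 else 0) *
          ∏ l, x l ^ (thetaExp A B C i j l - (if l = j then 1 else 0)
            - (if l = i then 1 else 0))) := by
  have h2 : (fun y => fderiv ℝ (fun z => thetaMat d A B C z i j) y (Pi.single j 1))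
      =ᶠ[nhds x] (fun y => fderiv ℝ (fun z : Fin d → ℝ => ∏ l, z l ^ thetaExp A B C i j l) y
        (Pi.single j 1)) := by
    filter_upwards [isOpen_pos.mem_nhds hx] with y hy
    have heq : (fun z => thetaMat d A B C z i j)
        =ᶠ[nhds y] (fun z : Fin d → ℝ => ∏ l, z l ^ thetaExp A B C i j l) := by
      filter_upwards [isOpen_pos.mem_nhds hy] with z hz
      exact theta_eq_prod A B C i j z hz
    rw [heq.fderiv_eq]
  rw [h2.fderiv_eq, second_deriv_prod_rpow _ x hx i j]

/-- Bound on the double divergence of `θ` (Lemma B.1(4)):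
`0 ≤ Σ_{i,j} ∂_i∂_j θ_{ij}(x) ≤ d(A+C)(A+C−1) + d(d−1)(A+C)²` on `(0,1]^d`. -/
theorem thetaMat_double_divergence_bound (d : ℕ) (hd : 2 ≤ d) (A B C : ℝ)
    (hC : 0 ≤ C) (hBA : B ≤ A) (hA2B : A < 2 * B) (hAC : 2 ≤ A + C)
    (x : Fin d → ℝ) (hx : ∀ l, 0 < x l) (hx1 : ∀ l, x l ≤ 1) :
    0 ≤ ∑ i, ∑ j, fderiv ℝ (fun y =>
          fderiv ℝ (fun z => thetaMat d A B C z i j) y (Pi.single j 1)) x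
          (Pi.single i 1) ∧
    ∑ i, ∑ j, fderiv ℝ (fun y =>
          fderiv ℝ (fun z => thetaMat d A B C z i j) y (Pi.single j 1)) x
          (Pi.single i 1)
      ≤ (d : ℝ) * (A + C) * (A + C - 1) + (d : ℝ) * ((d : ℝ) - 1) * (A + C)^2 := by
  have hprod : ∀ f : Fin d → ℝ, (∀ l, 0 ≤ f l) →
      0 ≤ (∏ l, x l ^ f l) ∧ (∏ l, x l ^ f l) ≤ 1 := by
    intro f hf
    constructor
    · exact Finset.prod_nonneg fun l _ => (Real.rpow_pos_of_pos (hx l) _).le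
    · exact Finset.prod_le_one (fun l _ => (Real.rpow_pos_of_pos (hx l) _).le)
        (fun l _ => Real.rpow_le_one (hx l).le (hx1 l) (hf l))
  have key : ∀ i j : Fin d,
      0 ≤ fderiv ℝ (fun y =>
          fderiv ℝ (fun z => thetaMat d A B C z i j) y (Pi.single j 1)) x (Pi.single i 1) ∧
      fderiv ℝ (fun y =>
          fderiv ℝ (fun z => thetaMat d A B C z i j) y (Pi.single j 1)) x (Pi.single i 1)
        ≤ if i = j then (A + C) * (A + C - 1) else (A + C)^2 := by
    intro i j
    rw [theta_second_deriv A B C i j x hx]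
    have hexp : ∀ l : Fin d, 0 ≤ thetaExp A B C i j l - (if l = j then 1 else 0)
        - (if l = i then 1 else 0) := by
      intro l
      unfold thetaExp
      by_cases h : i = j <;> subst_eqs <;> split_ifs <;> simp_all <;> linarith
    obtain ⟨hP0, hP1⟩ := hprod _ hexp
    by_cases h : i = j
    · subst h
      have hcj : thetaExp A B C i i i = A + C := by simp [thetaExp]; ring
      rw [hcj, if_pos rfl, if_pos rfl]
      constructor
      · exact mul_nonneg (by linarith) (mul_nonneg (by linarith) hP0)
      · exact mul_le_mul_of_nonneg_left
          (mul_le_of_le_one_right (by linarith) hP1) (by linarith)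
    · have hij : ¬ j = i := fun hji => h hji.symm
      have hcj : thetaExp A B C i j j = A + C := by simp [thetaExp, h, hij]
      have hci : thetaExp A B C i j i = A + C := by simp [thetaExp, h, hij]
      rw [hcj, hci, if_neg h, if_neg h, sub_zero]
      constructor
      · exact mul_nonneg (by linarith) (mul_nonneg (by linarith) hP0)
      · rw [pow_two]
        exact mul_le_mul_of_nonneg_left
          (mul_le_of_le_one_right (by linarith) hP1) (by linarith)
  constructor
  · exact Finset.sum_nonneg fun i _ => Finset.sum_nonneg fun j _ => (key i j).1
  · calc ∑ i, ∑ j, fderiv ℝ (fun y =>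
          fderiv ℝ (fun z => thetaMat d A B C z i j) y (Pi.single j 1)) x (Pi.single i 1)
        ≤ ∑ i : Fin d, ∑ j : Fin d,
            (if i = j then (A + C) * (A + C - 1) else (A + C)^2) :=
          Finset.sum_le_sum fun i _ => Finset.sum_le_sum fun j _ => (key i j).2
      _ = ∑ _i : Fin d, ((A + C) * (A + C - 1) + ((d : ℝ) - 1) * (A + C)^2) := by
          apply Finset.sum_congr rfl
          intro i _
          have h3 : ∀ j : Fin d, (if i = j then (A + C) * (A + C - 1) else (A + C)^2)
              = (A + C)^2 + (if i = j then (A + C) * (A + C - 1) - (A + C)^2 else 0) := by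
            intro j; split_ifs <;> ring
          simp only [h3, Finset.sum_add_distrib, Finset.sum_const, Finset.card_univ,
            Fintype.card_fin, nsmul_eq_mul, Finset.sum_ite_eq Finset.univ i, Finset.mem_univ,
            if_true]
          ring
      _ = (d : ℝ) * (A + C) * (A + C - 1) + (d : ℝ) * ((d : ℝ) - 1) * (A + C)^2 := by
          simp [Finset.sum_const, Finset.card_univ]
          ring
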